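/- In a totally rigid acyclic tree grammar G with non-terminals topologically ordered as α₁,…,αₙ (α₁ the start symbol), rearranging any derivation of a ground term t so that productions are applied in order of increasing index of their left-hand non-terminal yields again a valid derivation of t satisfying the rigidity condition. -/

import Mathlib

/-- Terms (trees) over a ranked alphabet `F` and non-terminals `N`. -/
inductive Tm (F N : Type) : Type
  | func : F → List (Tm F N) → Tm F N
  | nt : N → Tm F N

namespace Tm

variable {F N N' : Type}

/-- The subterm of a term at a position (a list of natural numbers), if it exists. -/
def at? : Tm F N → List Nat → Option (Tm F N)
  | t, [] => some t
  | nt _, _ :: _ => none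
  | func _ args, i :: p =>
      match args[i]? with
      | some a => a.at? p
      | none => none
  termination_by t p => p.length

/-- The non-terminal `β` occurs at position `p` in a term. -/
inductive OccursAt (β : N) : Tm F N → List Nat → Prop
  | here : OccursAt β (nt β) []
  | there {f : F} {args : List (Tm F N)} {i : Nat} {a : Tm F N} {p : List Nat} :
      args[i]? = some a → OccursAt β a p → OccursAt β (func f args) (i :: p)

/-- The non-terminal `β` occurs in the term `t`. -/
def Occurs (β : N) (t : Tm F N) : Prop := ∃ p, OccursAt β t p

/-- A term is ground if it contains no non-terminals. -/
inductive IsGround : Tm F N → Prop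
  | func {f : F} {args : List (Tm F N)} : (∀ a ∈ args, IsGround a) → IsGround (func f args)

/-- Substitution of the term `s` for the non-terminal `β`. -/
def subst [DecidableEq N] (β : N) (s : Tm F N) : Tm F N → Tm F N
  | nt γ => if γ = β then s else nt γ
  | func f args => func f (args.attach.map fun a => subst β s a.1)
  decreasing_by all_goals (simp only [Tm.func.sizeOf_spec]; have := List.sizeOf_lt_of_mem a.2; omega)

/-- Renaming of non-terminals. -/
def mapNT (σ : N → N') : Tm F N → Tm F N'
  | nt γ => nt (σ γ)
  | func f args => func f (args.attach.map fun a => mapNT σ a.1)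
  decreasing_by all_goals (simp only [Tm.func.sizeOf_spec]; have := List.sizeOf_lt_of_mem a.2; omega)

/-- The size (number of symbol occurrences) of a term. -/
def size : Tm F N → Nat
  | nt _ => 1
  | func _ args => 1 + (args.attach.map fun a => size a.1).sum
  decreasing_by all_goals (simp only [Tm.func.sizeOf_spec]; have := List.sizeOf_lt_of_mem a.2; omega)

end Tm

/-- One rewrite step using the single production `pr`: replace one occurrence of the
    left-hand side non-terminal by the right-hand side. -/
inductive ProdStep {F N : Type} : (N × Tm F N) → Tm F N → Tm F N → Prop
  | here {β : N} {t : Tm F N} : ProdStep (β, t) (Tm.nt β) t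
  | inArg {pr : N × Tm F N} {f : F} {args : List (Tm F N)} {i : Nat} {a b : Tm F N} :
      args[i]? = some a → ProdStep pr a b → ProdStep pr (Tm.func f args) (Tm.func f (args.set i b))

/-- A rigid tree grammar: a set of rigid non-terminals, a start symbol and a set of
    productions.  (Taking `rigid = ∅` gives a plain regular tree grammar;
    `rigid = Set.univ` a totally rigid one.) -/
structure RTG (F N : Type) where
  rigid : Set N
  start : N
  prods : Set (N × Tm F N)

/-- A derivation of the term `t` in the grammar `G`: a sequence of terms starting with the
    start symbol and ending with `t`, each step rewriting by a production of `G`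
    (the list `prs` records which production is used at each step). -/
structure Deriv {F N : Type} (G : RTG F N) (t : Tm F N) where
  prs : List (N × Tm F N)
  seq : List (Tm F N)
  len : seq.length = prs.length + 1
  head : seq.head? = some (Tm.nt G.start)
  last : seq.getLast? = some t
  mem : ∀ pr ∈ prs, pr ∈ G.prods
  steps : ∀ (i : Nat) (a b : Tm F N) (pr : N × Tm F N),
      seq[i]? = some a → seq[i + 1]? = some b → prs[i]? = some pr → ProdStep pr a b

namespace Deriv

variable {F N : Type} {G : RTG F N} {t : Tm F N}

/-- `p` is a `β`-position of the derivation `D`. -/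
def IsPos (D : Deriv G t) (β : N) (p : List Nat) : Prop :=
  ∃ s ∈ D.seq, Tm.OccursAt β s p

/-- The rigidity condition: all positions at which a rigid non-terminal occurs during the
    derivation carry equal subterms of the final term. -/
def Rigid (D : Deriv G t) : Prop :=
  ∀ β ∈ G.rigid, ∀ p q, D.IsPos β p → D.IsPos β q → t.at? p = t.at? q

end Deriv

/-- The language of a rigid tree grammar: ground terms derivable from the start symbol by a
    derivation satisfying the rigidity condition. -/
def RTG.Lang {F N : Type} (G : RTG F N) : Set (Tm F N) :=
  { t | t.IsGround ∧ ∃ D : Deriv G t, D.Rigid }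

/-- The language of the underlying regular tree grammar (no rigidity condition). -/
def RTG.RegLang {F N : Type} (G : RTG F N) : Set (Tm F N) :=
  { t | t.IsGround ∧ Nonempty (Deriv G t) }

/-- One-step reachability between non-terminals: `α →_P β` iff some production `α → t` in `P`
    has `β` occurring in `t`. -/
def Reach {F N : Type} (P : Set (N × Tm F N)) (α β : N) : Prop :=
  ∃ t, (α, t) ∈ P ∧ Tm.Occurs β t

/-- A set of productions is acyclic if the transitive closure of `→_P` is irreflexive. -/
def Acyclic {F N : Type} (P : Set (N × Tm F N)) : Prop :=
  ∀ α, ¬ Relation.TransGen (Reach P) α α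


lemma ProdStep.occurs {F N : Type} {pr : N × Tm F N} {a b : Tm F N} (h : ProdStep pr a b) :
    Tm.Occurs pr.1 a := by
  induction h with
  | here => exact ⟨[], .here⟩
  | inArg hget _ ih => exact ⟨_ :: ih.choose, .there hget ih.choose_spec⟩

lemma prodstep_commute {F N : Type} {p1 p2 : N × Tm F N} {a b c : Tm F N}
    (h1 : ProdStep p1 a b) (h2 : ProdStep p2 b c) (hno : ¬ Tm.Occurs p2.1 p1.2) :
    ∃ d, ProdStep p2 a d ∧ ProdStep p1 d c ∧
      ∀ δ r, Tm.OccursAt δ d r → Tm.OccursAt δ a r ∨ Tm.OccursAt δ c r := by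
  induction h1 generalizing c with
  | here => exact absurd h2.occurs hno
  | @inArg pr f args i a' b' hget hstep ih =>
    cases h2 with
    | @inArg _ _ _ j x y hget2 hstep2 =>
      have hilen : i < args.length := by
        by_contra hh; simp [List.getElem?_eq_none (le_of_not_gt hh)] at hget
      by_cases hij : j = i
      · subst hij
        have hx : x = b' := by
          rw [List.getElem?_set_self hilen] at hget2; exact (Option.some_inj.mp hget2).symm
        subst hx
        obtain ⟨d', hd1, hd2, hocc⟩ := ih hstep2 hno
        refine ⟨Tm.func f (args.set j d'), .inArg hget hd1, ?_, ?_⟩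
        · have : ProdStep pr (Tm.func f (args.set j d'))
              (Tm.func f ((args.set j d').set j y)) :=
            .inArg (by rw [List.getElem?_set_self (by simpa using hilen)]) hd2
          simpa [List.set_set] using this
        · rintro δ r hr
          cases hr with
          | @there _ _ k z _ hk hz =>
            by_cases hkj : k = j
            · subst hkj
              rw [List.getElem?_set_self (by simpa using hilen)] at hk
              cases Option.some_inj.mp hk
              rcases hocc δ _ hz with h | h
              · exact Or.inl (.there hget h)
              · exact Or.inr (.there (by
                  rw [List.getElem?_set_self (by simpa using hilen)]) h)
            · rw [List.getElem?_set_ne (fun h => hkj h.symm)] at hk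
              exact Or.inl (.there hk hz)
      · have hjlen : j < args.length := by
          by_contra hh
          rw [List.getElem?_eq_none (by simpa using le_of_not_gt hh)] at hget2
          simp at hget2
        have hx : args[j]? = some x := by
          rwa [List.getElem?_set_ne (fun h => hij h.symm)] at hget2
        refine ⟨Tm.func f (args.set j y), .inArg hx hstep2, ?_, ?_⟩
        · have : ProdStep pr (Tm.func f (args.set j y))
              (Tm.func f ((args.set j y).set i b')) :=
            .inArg (by rw [List.getElem?_set_ne hij]; exact hget) hstep
          rwa [List.set_comm _ _ hij] at this
        · rintro δ r hr
          cases hr with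
          | @there _ _ k z _ hk hz =>
            by_cases hkj : k = j
            · subst hkj
              rw [List.getElem?_set_self hjlen] at hk
              cases Option.some_inj.mp hk
              exact Or.inr (.there (by rw [List.getElem?_set_self (by simpa using hjlen)]) hz)
            · rw [List.getElem?_set_ne (fun h => hkj h.symm)] at hk
              exact Or.inl (.there hk hz)


def invCount {α : Type*} [LinearOrder α] : List α → ℕ
  | [] => 0
  | a :: l => l.countP (fun b => decide (b < a)) + invCount l

lemma perm_set_swap {α : Type*} : ∀ (l : List α) (i : ℕ) (h : i + 1 < l.length),
    ((l.set i (l[i+1]'h)).set (i+1) (l[i]'(by omega))).Perm l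
  | x :: y :: tl, 0, h => by simpa using List.Perm.swap x y tl
  | x :: tl, (i+1), h => by
    simpa using ((perm_set_swap tl i (by simpa using h)).cons x)

lemma invCount_set_swap {α : Type*} [LinearOrder α] :
    ∀ (l : List α) (i : ℕ) (h : i + 1 < l.length), (l[i+1]'h) < (l[i]'(by omega)) →
    invCount ((l.set i (l[i+1]'h)).set (i+1) (l[i]'(by omega))) < invCount l
  | x :: y :: tl, 0, h, hlt => by
    simp only [List.getElem_cons_zero, List.getElem_cons_succ, List.set] at *
    simp [invCount, List.countP_cons, hlt, not_lt.mpr hlt.le]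
    omega
  | x :: tl, (i+1), h, hlt => by
    simp only [List.getElem_cons_succ] at hlt
    have h' : i + 1 < tl.length := by simpa using h
    have hperm := perm_set_swap tl i h'
    have := invCount_set_swap tl i h' hlt
    simp only [List.set, invCount, List.getElem_cons_succ]
    rw [hperm.countP_eq]
    omega


/-- in a totally rigid acyclic tree grammar with topologically ordered
    non-terminals, any rigid derivation of a ground term t can be rearranged (the list of
    applied productions permuted into order of increasing index of the left-hand
    non-terminal), yielding again a valid rigid derivation of t. -/
theorem rearrange_derivation_sorted {F : Type} {n : ℕ} (G : RTG F (Fin n))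
    (hrig : G.rigid = Set.univ)
    (horder : ∀ i j : Fin n, Reach G.prods i j → i < j)
    (t : Tm F (Fin n)) (hg : t.IsGround) (D : Deriv G t) (hD : D.Rigid) :
    ∃ D' : Deriv G t, D'.Rigid ∧ D'.prs.Perm D.prs ∧
      (D'.prs.map Prod.fst).Pairwise (· ≤ ·) := by
  suffices h : ∀ m (D : Deriv G t), D.Rigid → invCount (D.prs.map Prod.fst) = m →
      ∃ D' : Deriv G t, D'.Rigid ∧ D'.prs.Perm D.prs ∧ (D'.prs.map Prod.fst).Pairwise (· ≤ ·) by
    exact h _ D hD rfl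
  intro m
  induction m using Nat.strong_induction_on with
  | _ m IH =>
    intro D hD hm
    by_cases hs : (D.prs.map Prod.fst).Pairwise (· ≤ ·)
    · exact ⟨D, hD, List.Perm.refl _, hs⟩
    have hs' : ¬ List.IsChain (· ≤ ·) (D.prs.map Prod.fst) := by
      rw [List.isChain_iff_pairwise]; exact hs
    rw [List.isChain_iff_getElem] at hs'
    push_neg at hs'
    obtain ⟨i, hilen, hlt'⟩ := hs'
    simp only [List.get_eq_getElem, List.getElem_map] at hlt'
    have hi : i + 1 < D.prs.length := by
      have := hilen; simp only [List.length_map] at this; omega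
    have hlen := D.len
    have hsi : i < D.seq.length := by omega
    have hsi1 : i + 1 < D.seq.length := by omega
    have hsi2 : i + 2 < D.seq.length := by omega
    set pr1 := D.prs[i]'(by omega) with hpr1
    set pr2 := D.prs[i+1]'hi with hpr2
    have hlt : pr2.1 < pr1.1 := by rw [hpr1, hpr2]; exact hlt'
    set a := D.seq[i]'hsi with ha
    set b := D.seq[i+1]'hsi1 with hb
    set c := D.seq[i+2]'hsi2 with hc
    have h1 : ProdStep pr1 a b :=
      D.steps i a b pr1 (List.getElem?_eq_getElem hsi) (List.getElem?_eq_getElem hsi1)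
        (List.getElem?_eq_getElem (by omega))
    have h2 : ProdStep pr2 b c :=
      D.steps (i+1) b c pr2 (List.getElem?_eq_getElem hsi1) (List.getElem?_eq_getElem hsi2)
        (List.getElem?_eq_getElem hi)
    have hno : ¬ Tm.Occurs pr2.1 pr1.2 := by
      intro hocc
      have hmem : (pr1.1, pr1.2) ∈ G.prods := by
        have := D.mem pr1 (by rw [hpr1]; exact List.getElem_mem (by omega))
        simpa using this
      have : pr1.1 < pr2.1 := horder _ _ ⟨pr1.2, hmem, hocc⟩
      exact absurd hlt (not_lt.mpr this.le)
    obtain ⟨d, hd1, hd2, hocc⟩ := prodstep_commute h1 h2 hno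
    clear_value pr1 pr2 a b c
    refine ?_
    set D' : Deriv G t :=
      { prs := (D.prs.set i pr2).set (i+1) pr1
        seq := D.seq.set (i+1) d
        len := by simp [hlen]
        head := by
          rw [List.head?_eq_getElem?, List.getElem?_set_ne (by omega),
            ← List.head?_eq_getElem?]
          exact D.head
        last := by
          rw [List.getLast?_eq_getElem?, List.length_set,
            List.getElem?_set_ne (by omega), ← List.getLast?_eq_getElem?]
          exact D.last
        mem := by
          intro pr hpr
          rcases List.mem_or_eq_of_mem_set hpr with h | h
          · rcases List.mem_or_eq_of_mem_set h with h | h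
            · exact D.mem pr h
            · exact h ▸ hpr2 ▸ D.mem _ (List.getElem_mem hi)
          · exact h ▸ hpr1 ▸ D.mem _ (List.getElem_mem (by omega))
        steps := by
          intro k x y pr hx hy hpr
          have hklen : k < D.prs.length := by
            by_contra hh
            rw [List.getElem?_eq_none (by simp; omega)] at hpr
            simp at hpr
          by_cases hk1 : k = i
          · subst hk1
            rw [List.getElem?_set_ne (by omega), List.getElem?_eq_getElem hsi, ← ha] at hx
            rw [List.getElem?_set_self hsi1] at hy
            rw [List.getElem?_set_ne (by omega), List.getElem?_set_self (by omega)] at hpr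
            cases hx; cases hy; cases hpr
            exact hd1
          · by_cases hk2 : k = i + 1
            · subst hk2
              rw [List.getElem?_set_self hsi1] at hx
              rw [List.getElem?_set_ne (by omega), List.getElem?_eq_getElem hsi2, ← hc] at hy
              rw [List.getElem?_set_self (by simp; omega)] at hpr
              cases hx; cases hy; cases hpr
              exact hd2
            · rw [List.getElem?_set_ne (by omega)] at hx
              rw [List.getElem?_set_ne (by omega)] at hy
              rw [List.getElem?_set_ne (by omega), List.getElem?_set_ne (by omega)] at hpr
              exact D.steps k x y pr hx hy hpr } with hD'
    have key : ∀ β p, D'.IsPos β p → D.IsPos β p := by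
      rintro β p ⟨s, hsmem, hso⟩
      rcases List.mem_or_eq_of_mem_set hsmem with h | h
      · exact ⟨s, h, hso⟩
      · subst h
        rcases hocc β p hso with h | h
        · exact ⟨a, ha ▸ List.getElem_mem hsi, h⟩
        · exact ⟨c, hc ▸ List.getElem_mem hsi2, h⟩
    have hrigid' : D'.Rigid := fun β hβ p q hp hq => hD β hβ p q (key β p hp) (key β q hq)
    have hperm : D'.prs.Perm D.prs := by
      have := perm_set_swap D.prs i hi
      rw [← hpr1, ← hpr2] at this
      exact this
    have hdec : invCount (D'.prs.map Prod.fst) < m := by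
      rw [← hm]
      have h' := invCount_set_swap (D.prs.map Prod.fst) i (by simpa using hi)
        (by simp only [List.getElem_map]; rw [← hpr1, ← hpr2]; exact hlt)
      simp only [List.getElem_map] at h'
      show invCount (((D.prs.set i pr2).set (i+1) pr1).map Prod.fst) < _
      rw [hpr1, hpr2]
      simpa [List.map_set] using h'
    obtain ⟨D'', hr, hp2, hsort⟩ := IH _ hdec D' hrigid' rfl
    exact ⟨D'', hr, hp2.trans hperm, hsort⟩
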